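/- Suppose α ∈ (0, 1/2), α' ∈ [0, α], and the set-valued predictor C : 𝒳 → Finset 𝒴 satisfies 1 − α ≤ P(Y ∈ C(X)) ≤ 1 − α'. Then H(Y|X) ≤ h_b(α) + α·log|𝒴| − (1 − α')·log(1 − α) + (1 − α')·log E[|C(X)|]. -/

import Mathlib

open Finset

/-- Binary entropy function (natural log). -/
noncomputable def binEnt (p : ℝ) : ℝ := -(p * Real.log p) - (1 - p) * Real.log (1 - p)

/-- For a probability mass function `μ` on `𝒳 × 𝒴` with coordinates `(X, Y)`,
if the set-valued predictor `C` has coverage `P(Y ∈ C(X)) ∈ [1 - α, 1 - α']` with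
`α ∈ (0, 1/2)` and `α' ∈ [0, α]`, then
`H(Y|X) ≤ h_b(α) + α log|𝒴| - (1 - α') log(1 - α) + (1 - α') log E[|C(X)|]`. -/
theorem conditional_entropy_le_conformal_bound
    {𝒳 𝒴 : Type*} [Fintype 𝒳] [Fintype 𝒴] [Nonempty 𝒳] [Nonempty 𝒴]
    (μ : 𝒳 → 𝒴 → ℝ)
    (hμ0 : ∀ x y, 0 ≤ μ x y)
    (hμ1 : ∑ x, ∑ y, μ x y = 1)
    (C : 𝒳 → Finset 𝒴)
    (α α' : ℝ) (hα0 : 0 < α) (hα2 : α < 1 / 2)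
    (hα'0 : 0 ≤ α') (hα'α : α' ≤ α)
    (hcov_lo : 1 - α ≤ ∑ x, ∑ y ∈ C x, μ x y)
    (hcov_hi : ∑ x, ∑ y ∈ C x, μ x y ≤ 1 - α') :
    (-∑ x, ∑ y, μ x y * Real.log (μ x y / ∑ y', μ x y'))
      ≤ binEnt α + α * Real.log (Fintype.card 𝒴)
        - (1 - α') * Real.log (1 - α)
        + (1 - α') * Real.log (∑ x, (∑ y, μ x y) * ((C x).card : ℝ)) := by
  classical
  have h1α : (0:ℝ) < 1 - α := by linarith
  have hN1 : (1:ℝ) ≤ (Fintype.card 𝒴 : ℝ) := by exact_mod_cast Fintype.card_pos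
  have hN0 : (0:ℝ) < (Fintype.card 𝒴 : ℝ) := by linarith
  set N : ℝ := (Fintype.card 𝒴 : ℝ) with hNdef
  set W : ℝ := ∑ x, ∑ y ∈ C x, μ x y with hWdef
  set S : ℝ := ∑ x, (∑ y, μ x y) * ((C x).card : ℝ) with hSdef
  have hpX0 : ∀ x, (0:ℝ) ≤ ∑ y, μ x y := fun x => Finset.sum_nonneg fun y _ => hμ0 x y
  have hμle : ∀ x y, μ x y ≤ ∑ y', μ x y' :=
    fun x y => Finset.single_le_sum (fun y' _ => hμ0 x y') (mem_univ y)
  have hWS : W ≤ S := by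
    rw [hWdef, hSdef]
    refine Finset.sum_le_sum fun x _ => ?_
    calc ∑ y ∈ C x, μ x y ≤ ∑ _y ∈ C x, ∑ y', μ x y' :=
          Finset.sum_le_sum fun y _ => hμle x y
      _ = (∑ y, μ x y) * ((C x).card : ℝ) := by
          rw [Finset.sum_const, nsmul_eq_mul, mul_comm]
  have hW_lo : 1 - α ≤ W := hcov_lo
  have hW_hi : W ≤ 1 - α' := hcov_hi
  have hS_pos : (0:ℝ) < S := by linarith
  set r : 𝒳 → 𝒴 → ℝ := fun x y => if y ∈ C x then (1 - α) / S else α / N with hrdef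
  have hrC : ∀ x y, y ∈ C x → r x y = (1 - α) / S := by
    intro x y hy; simp only [hrdef]; rw [if_pos hy]
  have hrO : ∀ x y, y ∉ C x → r x y = α / N := by
    intro x y hy; simp only [hrdef]; rw [if_neg hy]
  have hr_pos : ∀ x y, 0 < r x y := by
    intro x y
    by_cases h : y ∈ C x
    · rw [hrC x y h]; positivity
    · rw [hrO x y h]; positivity
  -- pointwise Gibbs inequality
  have key : ∀ x y, μ x y * Real.log (r x y) - μ x y * Real.log (μ x y / ∑ y', μ x y')
      ≤ (∑ y', μ x y') * r x y - μ x y := by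
    intro x y
    rcases eq_or_lt_of_le (hμ0 x y) with h | h
    · rw [← h]
      simp only [zero_mul, sub_zero, sub_zero]
      have := mul_nonneg (hpX0 x) (hr_pos x y).le
      linarith
    · have hpXpos : (0:ℝ) < ∑ y', μ x y' := lt_of_lt_of_le h (hμle x y)
      have hrp := hr_pos x y
      have hlog : Real.log ((∑ y', μ x y') * r x y / μ x y)
          ≤ (∑ y', μ x y') * r x y / μ x y - 1 :=
        Real.log_le_sub_one_of_pos (by positivity)
      have hexp : Real.log ((∑ y', μ x y') * r x y / μ x y)
          = Real.log (∑ y', μ x y') + Real.log (r x y) - Real.log (μ x y) := by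
        rw [Real.log_div (by positivity) h.ne', Real.log_mul hpXpos.ne' hrp.ne']
      have hdiv : Real.log (μ x y / ∑ y', μ x y')
          = Real.log (μ x y) - Real.log (∑ y', μ x y') :=
        Real.log_div h.ne' hpXpos.ne'
      have hmul := mul_le_mul_of_nonneg_left hlog h.le
      rw [hexp] at hmul
      have h2 : μ x y * ((∑ y', μ x y') * r x y / μ x y - 1)
          = (∑ y', μ x y') * r x y - μ x y := by
        field_simp
      rw [h2] at hmul
      rw [hdiv]
      nlinarith [hmul]
  -- total mass of reference measure
  have hmass : ∑ x, ∑ y, (∑ y', μ x y') * r x y ≤ 1 := by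
    have hx : ∀ x, ∑ y, (∑ y', μ x y') * r x y
        ≤ (∑ y, μ x y) * ((C x).card : ℝ) * ((1 - α) / S) + (∑ y, μ x y) * α := by
      intro x
      rw [← Finset.sum_add_sum_compl (C x) (fun y => (∑ y', μ x y') * r x y)]
      have e1 : ∑ y ∈ C x, (∑ y', μ x y') * r x y
          = (∑ y, μ x y) * ((C x).card : ℝ) * ((1 - α) / S) := by
        rw [Finset.sum_congr rfl (fun y hy =>
          show (∑ y', μ x y') * r x y = (∑ y', μ x y') * ((1 - α) / S) by
            rw [hrC x y hy])]
        rw [Finset.sum_const, nsmul_eq_mul]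
        ring
      have e2 : ∑ y ∈ (C x)ᶜ, (∑ y', μ x y') * r x y ≤ (∑ y, μ x y) * α := by
        have : ∑ y ∈ (C x)ᶜ, (∑ y', μ x y') * r x y
            = ((C x)ᶜ.card : ℝ) * ((∑ y, μ x y) * (α / N)) := by
          rw [Finset.sum_congr rfl (fun y hy =>
            show (∑ y', μ x y') * r x y = (∑ y', μ x y') * (α / N) by
              rw [hrO x y (Finset.mem_compl.mp hy)])]
          rw [Finset.sum_const, nsmul_eq_mul]
        rw [this]
        have hcard : ((C x)ᶜ.card : ℝ) ≤ N := by
          rw [hNdef]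
          exact_mod_cast Finset.card_le_univ _
        have hnn : 0 ≤ (∑ y, μ x y) * (α / N) :=
          mul_nonneg (hpX0 x) (by positivity)
        calc ((C x)ᶜ.card : ℝ) * ((∑ y, μ x y) * (α / N))
            ≤ N * ((∑ y, μ x y) * (α / N)) := by
              exact mul_le_mul_of_nonneg_right hcard hnn
          _ = (∑ y, μ x y) * α := by field_simp
      linarith [e1, e2]
    calc ∑ x, ∑ y, (∑ y', μ x y') * r x y
        ≤ ∑ x, ((∑ y, μ x y) * ((C x).card : ℝ) * ((1 - α) / S) + (∑ y, μ x y) * α) :=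
          Finset.sum_le_sum fun x _ => hx x
      _ = S * ((1 - α) / S) + 1 * α := by
          rw [Finset.sum_add_distrib, ← Finset.sum_mul, ← Finset.sum_mul, ← hSdef, hμ1]
      _ = 1 := by field_simp; ring
  -- Gibbs: bound entropy by cross entropy
  have gibbs : (-∑ x, ∑ y, μ x y * Real.log (μ x y / ∑ y', μ x y'))
      ≤ -∑ x, ∑ y, μ x y * Real.log (r x y) := by
    have hsum1 : ∑ x, ∑ y, (μ x y * Real.log (r x y)
          - μ x y * Real.log (μ x y / ∑ y', μ x y'))
        ≤ ∑ x, ∑ y, ((∑ y', μ x y') * r x y - μ x y) :=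
      Finset.sum_le_sum fun x _ => Finset.sum_le_sum fun y _ => key x y
    simp only [Finset.sum_sub_distrib] at hsum1
    linarith [hmass, hμ1, hsum1]
  -- compute cross entropy
  have hcompl : ∑ x, ∑ y ∈ (C x)ᶜ, μ x y = 1 - W := by
    have h : ∀ x, ∑ y ∈ C x, μ x y + ∑ y ∈ (C x)ᶜ, μ x y = ∑ y, μ x y :=
      fun x => Finset.sum_add_sum_compl _ _
    have := Finset.sum_congr rfl (fun x (_ : x ∈ (univ : Finset 𝒳)) => h x)
    rw [Finset.sum_add_distrib, hμ1, ← hWdef] at this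
    linarith
  have hlogr : ∑ x, ∑ y, μ x y * Real.log (r x y)
      = W * Real.log ((1 - α) / S) + (1 - W) * Real.log (α / N) := by
    have hx : ∀ x, ∑ y, μ x y * Real.log (r x y)
        = (∑ y ∈ C x, μ x y) * Real.log ((1 - α) / S)
          + (∑ y ∈ (C x)ᶜ, μ x y) * Real.log (α / N) := by
      intro x
      rw [← Finset.sum_add_sum_compl (C x) (fun y => μ x y * Real.log (r x y))]
      congr 1
      · rw [Finset.sum_congr rfl (fun y hy =>
          show μ x y * Real.log (r x y) = μ x y * Real.log ((1 - α) / S) by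
            rw [hrC x y hy]), Finset.sum_mul]
      · rw [Finset.sum_congr rfl (fun y hy =>
          show μ x y * Real.log (r x y) = μ x y * Real.log (α / N) by
            rw [hrO x y (Finset.mem_compl.mp hy)]), Finset.sum_mul]
    rw [Finset.sum_congr rfl (fun x (_ : x ∈ (univ : Finset 𝒳)) => hx x),
      Finset.sum_add_distrib, ← Finset.sum_mul, ← Finset.sum_mul, ← hWdef, hcompl]
  -- final arithmetic
  have hlog1 : Real.log ((1 - α) / S) = Real.log (1 - α) - Real.log S :=
    Real.log_div h1α.ne' hS_pos.ne'
  have hlog2 : Real.log (α / N) = Real.log α - Real.log N :=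
    Real.log_div hα0.ne' hN0.ne'
  have hlogα : Real.log α < 0 := Real.log_neg hα0 (by linarith)
  have hlog1α : Real.log (1 - α) < 0 := Real.log_neg h1α (by linarith)
  have hlogN : 0 ≤ Real.log N := Real.log_nonneg hN1
  have hlogS : Real.log (1 - α) ≤ Real.log S := Real.log_le_log h1α (by linarith)
  have P1 : 0 ≤ (1 - α' - W) * (Real.log S - Real.log (1 - α)) :=
    mul_nonneg (by linarith) (by linarith)
  have P2 : 0 ≤ (α - (1 - W)) * (-Real.log α) :=
    mul_nonneg (by linarith) (by linarith)
  have P3 : 0 ≤ (α - (1 - W)) * Real.log N :=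
    mul_nonneg (by linarith) hlogN
  have P4 : 0 ≤ (1 - α) * (-Real.log (1 - α)) :=
    mul_nonneg (by linarith) (by linarith)
  rw [hlogr] at gibbs
  rw [hlog1, hlog2] at gibbs
  unfold binEnt
  nlinarith [gibbs, P1, P2, P3, P4]
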